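/- Let (Ω, F, P) be a probability space and A_1, A_2, … arbitrary events satisfying ∑_{n=1}^∞ P(A_n) = ∞ and liminf_{n→∞} [ ∑_{1≤k<l≤n} P(A_k ∩ A_l) ] / [ ∑_{1≤k<l≤n} P(A_k) P(A_l) ] = 1. Then P(limsup_{n→∞} A_n) = 1, i.e., with probability one infinitely many of the events A_n occur. -/

import Mathlib

open MeasureTheory Filter
open scoped ENNReal

lemma chung_erdos {Ω : Type*} [MeasurableSpace Ω] (μ : Measure Ω)
    (A : ℕ → Set Ω) (hA : ∀ n, MeasurableSet (A n)) (s : Finset ℕ) :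
    (∑ k ∈ s, μ (A k)) ^ 2 ≤ μ (⋃ k ∈ s, A k) * ∑ k ∈ s, ∑ l ∈ s, μ (A k ∩ A l) := by
  set T : Ω → ℝ≥0∞ := fun ω => ∑ k ∈ s, (A k).indicator 1 ω with hT
  have hTm : Measurable T := Finset.measurable_sum _ fun k _ => (measurable_one.indicator (hA k))
  have h1 : ∫⁻ ω, T ω ∂μ = ∑ k ∈ s, μ (A k) := by
    rw [lintegral_finset_sum _ fun k _ => measurable_one.indicator (hA k)]
    simp [lintegral_indicator (hA _)]
  have h2 : ∫⁻ ω, T ω ^ (2:ℝ) ∂μ = ∑ k ∈ s, ∑ l ∈ s, μ (A k ∩ A l) := by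
    have hpt : ∀ ω, T ω ^ (2:ℝ) = ∑ k ∈ s, ∑ l ∈ s, (A k ∩ A l).indicator 1 ω := by
      intro ω
      rw [ENNReal.rpow_two, sq, hT, Finset.sum_mul_sum]
      refine Finset.sum_congr rfl fun k _ => Finset.sum_congr rfl fun l _ => ?_
      rw [Set.inter_indicator_one]
      rfl
    simp_rw [hpt]
    rw [lintegral_finset_sum _ fun k _ => Finset.measurable_sum _
      fun l _ => measurable_one.indicator ((hA k).inter (hA l))]
    refine Finset.sum_congr rfl fun k _ => ?_
    rw [lintegral_finset_sum _ fun l _ => measurable_one.indicator ((hA k).inter (hA l))]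
    simp [lintegral_indicator ((hA _).inter (hA _))]
  set U : Set Ω := ⋃ k ∈ s, A k with hU
  have hUm : MeasurableSet U := MeasurableSet.biUnion s.countable_toSet fun k _ => hA k
  have hTU : ∀ ω, T ω = T ω * U.indicator 1 ω := by
    intro ω
    by_cases hω : ω ∈ U
    · simp [Set.indicator_of_mem hω]
    · have : T ω = 0 := by
        refine Finset.sum_eq_zero fun k hk => ?_
        have : ω ∉ A k := fun h => hω (Set.mem_biUnion hk h)
        simp [Set.indicator_of_notMem this]
      simp [this]
  have holder := ENNReal.lintegral_mul_le_Lp_mul_Lq μ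
    (Real.HolderConjugate.two_two : Real.HolderConjugate 2 2) hTm.aemeasurable
    ((measurable_one.indicator hUm)).aemeasurable (f := T) (g := U.indicator 1)
  have hind : ∫⁻ ω, U.indicator (1 : Ω → ℝ≥0∞) ω ^ (2:ℝ) ∂μ = μ U := by
    have : ∀ ω, U.indicator (1 : Ω → ℝ≥0∞) ω ^ (2:ℝ) = U.indicator 1 ω := by
      intro ω; by_cases hω : ω ∈ U <;> simp [hω]
    simp_rw [this]
    simp [lintegral_indicator hUm]
  have key : (∫⁻ ω, T ω ∂μ) ≤ (∫⁻ ω, T ω ^ (2:ℝ) ∂μ) ^ ((1:ℝ)/2) * μ U ^ ((1:ℝ)/2) := by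
    calc (∫⁻ ω, T ω ∂μ) = ∫⁻ ω, T ω * U.indicator 1 ω ∂μ := lintegral_congr hTU
      _ ≤ _ := by rw [← hind]; simpa [one_div, Pi.mul_apply] using holder
  have := pow_le_pow_left' key 2
  rw [mul_pow] at this
  have hrw : ∀ x : ℝ≥0∞, (x ^ ((1:ℝ)/2)) ^ (2:ℕ) = x := by
    intro x
    rw [← ENNReal.rpow_natCast (x ^ ((1:ℝ)/2)) 2, ← ENNReal.rpow_mul]
    norm_num
  rw [hrw, hrw, h1, h2, mul_comm] at this
  exact this

lemma double_sum_split (n : ℕ) (f : ℕ → ℕ → ℝ) (hsymm : ∀ k l, f k l = f l k) :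
    ∑ l ∈ Finset.Icc 1 n, ∑ k ∈ Finset.Icc 1 n, f k l
      = (∑ l ∈ Finset.Icc 1 n, f l l) + 2 * ∑ l ∈ Finset.Icc 1 n, ∑ k ∈ Finset.Ico 1 l, f k l := by
  simp_rw [← Finset.Ico_add_one_right_eq_Icc]
  have hsplit : ∀ l ∈ Finset.Ico 1 (n+1),
      ∑ k ∈ Finset.Ico 1 (n+1), f k l
        = (∑ k ∈ Finset.Ico 1 l, f k l) + (f l l + ∑ k ∈ Finset.Ico (l+1) (n+1), f k l) := by
    intro l hl
    rw [Finset.mem_Ico] at hl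
    rw [← Finset.sum_Ico_consecutive _ hl.1 (le_of_lt hl.2),
      Finset.sum_eq_sum_Ico_succ_bot hl.2]
  rw [Finset.sum_congr rfl hsplit, Finset.sum_add_distrib, Finset.sum_add_distrib]
  have hupper : ∑ l ∈ Finset.Ico 1 (n+1), ∑ k ∈ Finset.Ico (l+1) (n+1), f k l
      = ∑ l ∈ Finset.Ico 1 (n+1), ∑ k ∈ Finset.Ico 1 l, f k l := by
    rw [Finset.sum_Ico_Ico_comm' 1 (n+1) (fun i j => f j i)]
    exact Finset.sum_congr rfl fun l _ => Finset.sum_congr rfl fun k _ => hsymm l k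
  rw [hupper]; ring

open MeasureTheory ProbabilityTheory Filter

theorem borel_cantelli_kochen_stone
    {Ω : Type*} [MeasurableSpace Ω] (μ : Measure Ω) [IsProbabilityMeasure μ]
    (A : ℕ → Set Ω) (hA : ∀ n, MeasurableSet (A n))
    (hsum : (∑' n : ℕ, μ (A (n + 1))) = ⊤)
    (hratio : atTop.liminf
        (fun n : ℕ =>
          (∑ l ∈ Finset.Icc 1 n, ∑ k ∈ Finset.Ico 1 l, (μ (A k ∩ A l)).toReal) /
          (∑ l ∈ Finset.Icc 1 n, ∑ k ∈ Finset.Ico 1 l, (μ (A k)).toReal * (μ (A l)).toReal))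
      = 1) :
    μ (Filter.limsup A atTop) = 1 := by
  set p : ℕ → ℝ := fun n => ∑ k ∈ Finset.Icc 1 n, (μ (A k)).toReal with hp
  set a : ℕ → ℝ := fun n =>
    ∑ l ∈ Finset.Icc 1 n, ∑ k ∈ Finset.Ico 1 l, (μ (A k ∩ A l)).toReal with ha
  set c : ℕ → ℝ := fun n =>
    ∑ l ∈ Finset.Icc 1 n, ∑ k ∈ Finset.Ico 1 l, (μ (A k)).toReal * (μ (A l)).toReal with hc
  have hfin : ∀ s : Set Ω, μ s ≠ ⊤ := fun s => measure_ne_top μ s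
  have hk1 : ∀ k, (μ (A k)).toReal ≤ 1 := fun k => by
    have := prob_le_one (μ := μ) (s := A k)
    calc (μ (A k)).toReal ≤ (1 : ℝ≥0∞).toReal := ENNReal.toReal_mono (by simp) this
      _ = 1 := by simp
  have hknn : ∀ k, 0 ≤ (μ (A k)).toReal := fun k => ENNReal.toReal_nonneg
  have hpnn : ∀ n, 0 ≤ p n := fun n => Finset.sum_nonneg fun k _ => hknn k
  have hann : ∀ n, 0 ≤ a n := fun n =>
    Finset.sum_nonneg fun l _ => Finset.sum_nonneg fun k _ => ENNReal.toReal_nonneg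
  have hcnn : ∀ n, 0 ≤ c n := fun n =>
    Finset.sum_nonneg fun l _ => Finset.sum_nonneg fun k _ => mul_nonneg (hknn k) (hknn l)
  -- p tendsto atTop
  have hp_mono : Monotone p := fun i j hij =>
    Finset.sum_le_sum_of_subset_of_nonneg (Finset.Icc_subset_Icc_right hij)
      (fun k _ _ => hknn k)
  have hprange : ∀ n, p n = ∑ i ∈ Finset.range n, (μ (A (i + 1))).toReal := by
    intro n
    simp only [hp]
    rw [← Finset.Ico_add_one_right_eq_Icc, Finset.sum_Ico_eq_sum_range]
    simp [add_comm]
  have hp_tendsto : Tendsto p atTop atTop := by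
    refine tendsto_atTop_atTop_of_monotone hp_mono fun M => ?_
    have htd := ENNReal.tendsto_nat_tsum (fun i => μ (A (i + 1)))
    rw [hsum, ENNReal.tendsto_nhds_top_iff_nnreal] at htd
    obtain ⟨n, hn⟩ := (htd M.toNNReal).exists
    refine ⟨n, ?_⟩
    have hfin' : (∑ i ∈ Finset.range n, μ (A (i + 1))) ≠ ⊤ :=
      (ENNReal.sum_lt_top.2 fun i _ => (hfin _).lt_top).ne
    have h1 : (M.toNNReal : ℝ≥0∞).toReal ≤ (∑ i ∈ Finset.range n, μ (A (i + 1))).toReal :=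
      ENNReal.toReal_mono hfin' (le_of_lt hn)
    rw [ENNReal.coe_toReal, ENNReal.toReal_sum fun i _ => hfin _] at h1
    calc M ≤ (M.toNNReal : ℝ) := Real.le_coe_toNNReal M
      _ ≤ _ := h1
      _ = p n := (hprange n).symm
  -- 2 c n + q n = p n ^ 2, with q n ≤ p n
  have hsq : ∀ n, p n ^ 2 = (∑ l ∈ Finset.Icc 1 n, (μ (A l)).toReal ^ 2) + 2 * c n := by
    intro n
    have hds := double_sum_split n (fun k l => (μ (A k)).toReal * (μ (A l)).toReal)
      (fun k l => mul_comm _ _)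
    calc p n ^ 2 = ∑ l ∈ Finset.Icc 1 n, ∑ k ∈ Finset.Icc 1 n,
          (μ (A k)).toReal * (μ (A l)).toReal := by
          rw [sq, hp, Finset.sum_mul_sum]
          exact Finset.sum_congr rfl fun l _ => Finset.sum_congr rfl fun k _ => mul_comm _ _
      _ = _ := by rw [hds]; simp [sq, hc]
  have hcq : ∀ n, p n ^ 2 ≤ 2 * c n + p n := by
    intro n
    rw [hsq n]
    have : (∑ l ∈ Finset.Icc 1 n, (μ (A l)).toReal ^ 2) ≤ p n :=
      Finset.sum_le_sum fun l _ => by nlinarith [hk1 l, hknn l]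
    linarith
  have h2c : ∀ n, 2 * c n ≤ p n ^ 2 := by
    intro n
    rw [hsq n]
    have : 0 ≤ ∑ l ∈ Finset.Icc 1 n, (μ (A l)).toReal ^ 2 :=
      Finset.sum_nonneg fun l _ => sq_nonneg _
    linarith
  -- the full double sum equals p n + 2 a n
  have hpa : ∀ n, (∑ k ∈ Finset.Icc 1 n, ∑ l ∈ Finset.Icc 1 n, (μ (A k ∩ A l)).toReal)
      = p n + 2 * a n := by
    intro n
    rw [Finset.sum_comm]
    have hds := double_sum_split n (fun k l => (μ (A k ∩ A l)).toReal)
      (fun k l => by rw [Set.inter_comm])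
    rw [hds]
    simp [Set.inter_self, hp, ha]
  -- measure of tail unions is one
  have hU : ∀ m : ℕ, μ (⋃ k, ⋃ (_ : m ≤ k), A k) = 1 := by
    intro m
    set t := (μ (⋃ k, ⋃ (_ : m ≤ k), A k)).toReal with htdef
    have ht0 : 0 ≤ t := ENNReal.toReal_nonneg
    have ht1 : t ≤ 1 := by
      have h := prob_le_one (μ := μ) (s := ⋃ k, ⋃ (_ : m ≤ k), A k)
      calc t ≤ (1 : ℝ≥0∞).toReal := ENNReal.toReal_mono (by simp) h
        _ = 1 := by simp
    have hkey : ∀ n, m ≤ n → (p n - p m) ^ 2 ≤ t * (p n + 2 * a n) := by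
      intro n hn
      have hce := chung_erdos μ A hA (Finset.Icc (m + 1) n)
      have hsub : (⋃ k ∈ Finset.Icc (m + 1) n, A k) ⊆ ⋃ k, ⋃ (_ : m ≤ k), A k := by
        refine Set.iUnion₂_subset fun k hk => ?_
        rw [Finset.mem_Icc] at hk
        exact Set.subset_iUnion₂ (s := fun k (_ : m ≤ k) => A k) k (by omega)
      have hss : Finset.Icc (m + 1) n ⊆ Finset.Icc 1 n := Finset.Icc_subset_Icc (by omega) le_rfl
      have hDsub : (∑ k ∈ Finset.Icc (m + 1) n, ∑ l ∈ Finset.Icc (m + 1) n, μ (A k ∩ A l))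
          ≤ ∑ k ∈ Finset.Icc 1 n, ∑ l ∈ Finset.Icc 1 n, μ (A k ∩ A l) := by
        calc _ ≤ ∑ k ∈ Finset.Icc (m + 1) n, ∑ l ∈ Finset.Icc 1 n, μ (A k ∩ A l) :=
              Finset.sum_le_sum fun k _ => Finset.sum_le_sum_of_subset hss
          _ ≤ _ := Finset.sum_le_sum_of_subset hss
      have hle : (∑ k ∈ Finset.Icc (m + 1) n, μ (A k)) ^ 2
          ≤ μ (⋃ k, ⋃ (_ : m ≤ k), A k)
            * ∑ k ∈ Finset.Icc 1 n, ∑ l ∈ Finset.Icc 1 n, μ (A k ∩ A l) :=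
        le_trans hce (mul_le_mul' (measure_mono hsub) hDsub)
      have hDfin : (μ (⋃ k, ⋃ (_ : m ≤ k), A k)
          * ∑ k ∈ Finset.Icc 1 n, ∑ l ∈ Finset.Icc 1 n, μ (A k ∩ A l)) ≠ ⊤ :=
        ENNReal.mul_ne_top (hfin _)
          (ENNReal.sum_lt_top.2 fun k _ =>
            (ENNReal.sum_lt_top.2 fun l _ => (hfin _).lt_top)).ne
      have hTR := ENNReal.toReal_mono hDfin hle
      rw [ENNReal.toReal_pow, ENNReal.toReal_mul,
        ENNReal.toReal_sum (fun k _ => hfin _)] at hTR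
      have hdts : (∑ k ∈ Finset.Icc 1 n, ∑ l ∈ Finset.Icc 1 n, μ (A k ∩ A l)).toReal
          = p n + 2 * a n := by
        rw [ENNReal.toReal_sum
          (fun k _ => (ENNReal.sum_lt_top.2 fun l _ => (hfin _).lt_top).ne), ← hpa n]
        exact Finset.sum_congr rfl fun k _ => ENNReal.toReal_sum fun l _ => hfin _
      rw [hdts] at hTR
      have hps : ∑ k ∈ Finset.Icc (m + 1) n, (μ (A k)).toReal = p n - p m := by
        have hcons := Finset.sum_Ico_consecutive (fun k => (μ (A k)).toReal)
          (Nat.le_add_left 1 m) (Nat.succ_le_succ hn)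
        simp only [hp]
        simp_rw [← Finset.Ico_add_one_right_eq_Icc]
        simp only [Nat.succ_eq_add_one] at hcons
        linarith
      rw [hps] at hTR
      exact hTR
    have hone : ∀ δ : ℝ, 0 < δ → δ ≤ 1 → 1 ≤ t + 4 * δ := by
      intro δ hδ hδ1
      have hfr : ∃ᶠ n in atTop, a n / c n < 1 + δ := by
        by_contra hev
        rw [Filter.not_frequently] at hev
        have hmem : (1 + δ) ∈ {b : ℝ | ∀ᶠ n in atTop,
            b ≤ a n / c n} := hev.mono fun n h => not_lt.mp h
        have hliminf := hratio
        rw [Filter.liminf_eq] at hliminf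
        by_cases hbdd : BddAbove {b : ℝ | ∀ᶠ n in atTop, b ≤ a n / c n}
        · have hsup := le_csSup hbdd hmem
          rw [hliminf] at hsup
          linarith
        · rw [Real.sSup_of_not_bddAbove hbdd] at hliminf
          norm_num at hliminf
      have hC0 : 0 ≤ p m := hpnn m
      have hev2 : ∀ᶠ n in atTop, m ≤ n ∧ max ((p m + 1) / δ) 2 ≤ p n :=
        (eventually_ge_atTop m).and (hp_tendsto.eventually_ge_atTop _)
      obtain ⟨n, hun, hmn, hMn⟩ := (hfr.and_eventually hev2).exists
      have hx2 : 2 ≤ p n := le_trans (le_max_right _ _) hMn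
      have hxC : p m + 1 ≤ δ * p n := by
        have h1 : (p m + 1) / δ ≤ p n := le_trans (le_max_left _ _) hMn
        rw [div_le_iff₀ hδ] at h1
        linarith
      have hcpos : 0 < c n := by nlinarith [hcq n]
      have hac : a n < (1 + δ) * c n := (div_lt_iff₀ hcpos).mp hun
      have hk := hkey n hmn
      have h2cn := h2c n
      have hxpos : 0 < p n := by linarith
      have e1 : (p n - p m) ^ 2 ≤ t * p n + t * (1 + δ) * (2 * c n) := by nlinarith
      have e2 : t * (1 + δ) * (2 * c n) ≤ t * (1 + δ) * p n ^ 2 :=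
        mul_le_mul_of_nonneg_left h2cn (by nlinarith)
      have e3 : p n ≤ δ * p n ^ 2 := by nlinarith
      have e4 : 2 * p m * p n ≤ 2 * δ * p n ^ 2 := by nlinarith
      have key2 : 1 * p n ^ 2 ≤ (t + 4 * δ) * p n ^ 2 := by nlinarith
      have := (mul_le_mul_iff_of_pos_right (by positivity : (0 : ℝ) < p n ^ 2)).mp key2
      linarith
    have htge : 1 ≤ t := by
      by_contra hlt
      push_neg at hlt
      have hδp : 0 < (1 - t) / 5 := by linarith
      have := hone ((1 - t) / 5) hδp (by linarith)
      linarith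
    refine le_antisymm prob_le_one ?_
    by_contra hlt2
    push_neg at hlt2
    have : t < 1 := by
      have h := (ENNReal.toReal_lt_toReal (hfin _) (by simp : (1 : ℝ≥0∞) ≠ ⊤)).mpr hlt2
      simpa using h
    linarith
  -- conclude
  have hlim : Filter.limsup A atTop = ⋂ m, ⋃ k, ⋃ (_ : m ≤ k), A k := by
    rw [limsup_eq_iInf_iSup_of_nat]
    simp only [Set.iInf_eq_iInter, Set.iSup_eq_iUnion]
  rw [hlim]
  have hVm : ∀ m : ℕ, MeasurableSet (⋃ k, ⋃ (_ : m ≤ k), A k) := fun m =>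
    MeasurableSet.iUnion fun k => MeasurableSet.iUnion fun _ => hA k
  rw [← prob_compl_eq_zero_iff (MeasurableSet.iInter hVm)]
  rw [Set.compl_iInter]
  refine measure_iUnion_null fun m => ?_
  exact (prob_compl_eq_zero_iff (hVm m)).mpr (hU m)
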